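/- Let G = (V, E) be an undirected graph and G_p = (V, E_p) the random subgraph where each edge is kept independently with probability p ∈ (0, 1). Then with high probability, for every vertex v, core(G_p, v) ≥ (1 − ε)·p·core(G, v) − O(log n / ε). -/

import Mathlib

open Finset
open scoped NNRat Classical

/-- Degree of `u` inside `S` in the undirected graph with edge set `F`. -/
def edegIn {n : ℕ} (F : Finset (Sym2 (Fin n))) (S : Finset (Fin n)) (u : Fin n) : ℕ :=
  (S.filter fun w => w ≠ u ∧ s(u, w) ∈ F).card

/-- Minimum degree of the induced subgraph on `S`. -/
def emindegIn {n : ℕ} (F : Finset (Sym2 (Fin n))) (S : Finset (Fin n)) : ℕ :=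
  if h : S.Nonempty then S.inf' h (edegIn F S) else 0

/-- Coreness of `v` in the undirected graph with edge set `F`. -/
def coreE {n : ℕ} (F : Finset (Sym2 (Fin n))) (v : Fin n) : ℕ :=
  ((univ : Finset (Fin n)).powerset.filter fun S => v ∈ S).sup (emindegIn F)

/-- Density of the undirected graph with edge set `F`: the maximum over nonempty
`S` of `|F[S]| / |S|`. -/
def densE {n : ℕ} (F : Finset (Sym2 (Fin n))) : ℚ≥0 :=
  ((univ : Finset (Fin n)).powerset.filter fun S => S.Nonempty).sup
    fun S => ((F ∩ S.sym2).card : ℚ≥0) / (S.card : ℚ≥0)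

/-- Arboricity via Nash-Williams: `max` over `S` with `|S| ≥ 2` of `⌈|F[S]|/(|S|−1)⌉`. -/
def arbE {n : ℕ} (F : Finset (Sym2 (Fin n))) : ℕ :=
  ((univ : Finset (Fin n)).powerset.filter fun S => 2 ≤ S.card).sup
    fun S => ⌈((F ∩ S.sym2).card : ℚ) / ((S.card : ℚ) - 1)⌉₊

/-- The probability, when each edge of `E0` is kept independently with probability `p`,
that the resulting random edge subset satisfies `A`. -/
noncomputable def probE {n : ℕ} (E0 : Finset (Sym2 (Fin n))) (p : ℝ)
    (A : Finset (Sym2 (Fin n)) → Prop) : ℝ :=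
  ∑ F ∈ E0.powerset,
    if A F then p ^ F.card * (1 - p) ^ (E0.card - F.card) else 0

/- ### Auxiliary probability lemmas -/

lemma key_identity {n : ℕ} (E0 T : Finset (Sym2 (Fin n))) (hT : T ⊆ E0) (p x : ℝ) :
    ∑ F ∈ E0.powerset, p ^ F.card * (1 - p) ^ (E0.card - F.card) * x ^ ((F ∩ T).card)
      = (p * x + (1 - p)) ^ T.card * (p + (1 - p)) ^ (E0.card - T.card) := by
  have h := Finset.prod_add (fun e => p * (if e ∈ T then x else 1))
      (fun _ => (1 - p)) E0
  have lhs : ∏ e ∈ E0, (p * (if e ∈ T then x else 1) + (1 - p))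
      = (p * x + (1 - p)) ^ T.card * (p + (1 - p)) ^ (E0.card - T.card) := by
    rw [Finset.prod_congr rfl (fun e _ => by
      by_cases he : e ∈ T <;> simp [he] :
      ∀ e ∈ E0, (p * (if e ∈ T then x else 1) + (1 - p))
        = if e ∈ T then (p * x + (1 - p)) else (p + (1 - p)))]
    rw [Finset.prod_ite, Finset.prod_const, Finset.prod_const,
      Finset.filter_mem_eq_inter, Finset.inter_eq_right.mpr hT]
    congr 1
    rw [Finset.filter_not, Finset.filter_mem_eq_inter, Finset.inter_eq_right.mpr hT,
      Finset.card_sdiff_of_subset hT]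
  rw [lhs] at h
  rw [h]
  apply Finset.sum_congr rfl
  intro F hF
  rw [Finset.mem_powerset] at hF
  rw [Finset.prod_mul_distrib, Finset.prod_const, ← Finset.prod_filter,
    Finset.filter_mem_eq_inter, Finset.prod_const, Finset.prod_const,
    Finset.card_sdiff_of_subset hF]
  ring

lemma wt_nonneg {n : ℕ} (p : ℝ) (hp0 : 0 ≤ p) (hp1 : p ≤ 1) (E0 F : Finset (Sym2 (Fin n))) :
    0 ≤ p ^ F.card * (1 - p) ^ (E0.card - F.card) :=
  mul_nonneg (pow_nonneg hp0 _) (pow_nonneg (by linarith) _)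

lemma probE_total {n : ℕ} (E0 : Finset (Sym2 (Fin n))) (p : ℝ) :
    ∑ F ∈ E0.powerset, p ^ F.card * (1 - p) ^ (E0.card - F.card) = 1 := by
  have h := key_identity E0 ∅ (Finset.empty_subset _) p 1
  simpa using h

lemma probE_nonneg {n : ℕ} (E0 : Finset (Sym2 (Fin n))) (p : ℝ) (hp0 : 0 ≤ p) (hp1 : p ≤ 1)
    (A : Finset (Sym2 (Fin n)) → Prop) : 0 ≤ probE E0 p A := by
  apply Finset.sum_nonneg
  intro F _
  split
  · exact wt_nonneg p hp0 hp1 E0 F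
  · exact le_refl _

lemma probE_mono {n : ℕ} (E0 : Finset (Sym2 (Fin n))) (p : ℝ) (hp0 : 0 ≤ p) (hp1 : p ≤ 1)
    (A B : Finset (Sym2 (Fin n)) → Prop) (h : ∀ F, A F → B F) :
    probE E0 p A ≤ probE E0 p B := by
  apply Finset.sum_le_sum
  intro F _
  by_cases hA : A F
  · rw [if_pos hA, if_pos (h F hA)]
  · rw [if_neg hA]
    split
    · exact wt_nonneg p hp0 hp1 E0 F
    · exact le_refl _

lemma probE_eq_zero {n : ℕ} (E0 : Finset (Sym2 (Fin n))) (p : ℝ)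
    (A : Finset (Sym2 (Fin n)) → Prop) (h : ∀ F, ¬ A F) : probE E0 p A = 0 :=
  Finset.sum_eq_zero fun F _ => if_neg (h F)

lemma probE_true {n : ℕ} (E0 : Finset (Sym2 (Fin n))) (p : ℝ)
    (A : Finset (Sym2 (Fin n)) → Prop) (h : ∀ F, A F) : probE E0 p A = 1 := by
  rw [probE, Finset.sum_congr rfl fun F _ => if_pos (h F)]
  exact probE_total E0 p

lemma probE_union_bound {n : ℕ} (E0 : Finset (Sym2 (Fin n))) (p : ℝ)
    (hp0 : 0 ≤ p) (hp1 : p ≤ 1) (A : Finset (Sym2 (Fin n)) → Prop)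
    {ι : Type*} (I : Finset ι) (bad : ι → Finset (Sym2 (Fin n)) → Prop)
    (h : ∀ F ∈ E0.powerset, ¬ A F → ∃ i ∈ I, bad i F) :
    1 - ∑ i ∈ I, probE E0 p (bad i) ≤ probE E0 p A := by
  have key : (1 : ℝ) ≤ probE E0 p A + ∑ i ∈ I, probE E0 p (bad i) := by
    rw [← probE_total E0 p]
    unfold probE
    rw [Finset.sum_comm (s := I)]
    rw [← Finset.sum_add_distrib]
    apply Finset.sum_le_sum
    intro F hF
    by_cases hA : A F
    · simp only [hA, if_true]
      have : 0 ≤ ∑ i ∈ I, if bad i F then p ^ F.card * (1 - p) ^ (E0.card - F.card) else 0 := by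
        apply Finset.sum_nonneg
        intro i _
        split
        · exact wt_nonneg p hp0 hp1 E0 F
        · exact le_refl _
      linarith
    · simp only [hA, if_false]
      obtain ⟨i, hi, hbad⟩ := h F hF hA
      have : p ^ F.card * (1 - p) ^ (E0.card - F.card)
          ≤ ∑ i ∈ I, if bad i F then p ^ F.card * (1 - p) ^ (E0.card - F.card) else 0 := by
        have := Finset.single_le_sum (f := fun i =>
          if bad i F then p ^ F.card * (1 - p) ^ (E0.card - F.card) else 0)
          (fun j _ => by show 0 ≤ (if bad j F then _ else 0); split; exacts [wt_nonneg p hp0 hp1 E0 F, le_refl _]) hi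
        simpa [hbad] using this
      linarith
  linarith

/- ### The Chernoff bound -/

lemma neg_log_le {y : ℝ} (h0 : 0 ≤ y) (h1 : y ≤ 1/4) : -Real.log (1 - y) ≤ y + y^2 := by
  have hy : (0:ℝ) < 1 - y := by linarith
  have key : Real.exp (-(y + y^2)) ≤ 1 - y := by
    set z : ℝ := y + y^2 with hz
    have hz0 : 0 ≤ z := by nlinarith
    have h2 : 1 + z/2 ≤ Real.exp (z/2) := by
      have := Real.add_one_le_exp (z/2); linarith
    have h3 : Real.exp (z/2) * Real.exp (z/2) = Real.exp z := by
      rw [← Real.exp_add]; congr 1; ring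
    have h4 : Real.exp (-z) * Real.exp z = 1 := by
      rw [← Real.exp_add, neg_add_cancel, Real.exp_zero]
    have hE0 : (0:ℝ) < 1 + z/2 := by linarith
    have hE2 : (1 + z/2)^2 ≤ Real.exp z := by
      rw [← h3]; nlinarith [h2, hE0]
    have hpoly : 1 ≤ (1 - y) * (1 + z/2)^2 := by
      rw [hz]; nlinarith [sq_nonneg y, mul_nonneg h0 h0, mul_nonneg (mul_nonneg h0 h0) h0]
    have h6 : 1 ≤ (1 - y) * Real.exp z := by nlinarith [hE2, hy]
    have hEpos := Real.exp_pos z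
    rw [← h4] at h6
    calc Real.exp (-z) = Real.exp (-z) * Real.exp z / Real.exp z := by
          field_simp
      _ ≤ (1 - y) * Real.exp z / Real.exp z := by
          apply div_le_div_of_nonneg_right _ hEpos.le
          nlinarith [h6, hEpos]
      _ = 1 - y := by field_simp
  have := Real.log_le_log (Real.exp_pos _) key
  rw [Real.log_exp] at this
  linarith

lemma chernoff_tail {n : ℕ} (E0 T : Finset (Sym2 (Fin n))) (hT : T ⊆ E0) (p : ℝ)
    (hp0 : 0 < p) (hp1 : p < 1) (ε D m : ℝ) (hε0 : 0 < ε) (hε1 : ε < 1)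
    (hD : 0 ≤ D) (hm0 : 0 ≤ m) (hm : m ≤ (1 - ε) * p * T.card - D) :
    probE E0 p (fun F => ((F ∩ T).card : ℝ) < m) ≤ Real.exp (-(ε * D / 4)) := by
  obtain ⟨ε', hε'⟩ : ∃ x : ℝ, x = ε / 4 := ⟨_, rfl⟩
  have hε'0 : 0 ≤ ε' := by rw [hε']; positivity
  have hε'4 : ε' ≤ 1/4 := by rw [hε']; linarith
  have hxpos : (0:ℝ) < 1 - ε' := by linarith
  obtain ⟨L, hL⟩ : ∃ x : ℝ, x = -Real.log (1 - ε') := ⟨_, rfl⟩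
  have hL0 : 0 ≤ L := by
    rw [hL]
    have : Real.log (1 - ε') ≤ 0 := Real.log_nonpos (by linarith) (by linarith)
    linarith
  have hLle : L ≤ ε' + ε'^2 := by rw [hL]; exact neg_log_le hε'0 hε'4
  have hxexp : (1 - ε') = Real.exp (-L) := by
    rw [hL, neg_neg, Real.exp_log hxpos]
  obtain ⟨k, hk⟩ : ∃ x : ℝ, x = (T.card : ℝ) := ⟨_, rfl⟩
  have hk0 : (0:ℝ) ≤ k := by rw [hk]; exact Nat.cast_nonneg _
  have hm' : m ≤ (1 - ε) * p * k - D := by rw [hk]; exact hm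
  have step1 : probE E0 p (fun F => ((F ∩ T).card : ℝ) < m)
      ≤ Real.exp (m * L) * ((p * (1 - ε') + (1 - p)) ^ T.card
          * (p + (1 - p)) ^ (E0.card - T.card)) := by
    rw [← key_identity E0 T hT p (1 - ε'), Finset.mul_sum]
    unfold probE
    apply Finset.sum_le_sum
    intro F _
    have hw := wt_nonneg p hp0.le hp1.le E0 F
    have hxc : (1 - ε') ^ (F ∩ T).card = Real.exp (-(((F ∩ T).card : ℝ) * L)) := by
      rw [hxexp, ← Real.exp_nat_mul]; ring_nf
    split
    · rename_i hlt
      have h1 : (1:ℝ) ≤ Real.exp (m * L) * Real.exp (-(((F ∩ T).card : ℝ) * L)) := by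
        rw [← Real.exp_add]
        apply Real.one_le_exp
        nlinarith [hlt, hL0]
      calc p ^ F.card * (1 - p) ^ (E0.card - F.card)
          ≤ (Real.exp (m * L) * Real.exp (-(((F ∩ T).card : ℝ) * L)))
            * (p ^ F.card * (1 - p) ^ (E0.card - F.card)) := by
            nlinarith [h1, hw]
        _ = Real.exp (m * L) * (p ^ F.card * (1 - p) ^ (E0.card - F.card)
              * (1 - ε') ^ (F ∩ T).card) := by rw [hxc]; ring
    · have : (0:ℝ) ≤ p ^ F.card * (1 - p) ^ (E0.card - F.card) * (1 - ε') ^ (F ∩ T).card :=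
        mul_nonneg hw (pow_nonneg hxpos.le _)
      positivity
  have hfac : (p * (1 - ε') + (1 - p)) ^ T.card ≤ Real.exp (-(p * ε') * k) := by
    have hb0 : (0:ℝ) ≤ p * (1 - ε') + (1 - p) := by nlinarith
    have hble : p * (1 - ε') + (1 - p) ≤ Real.exp (-(p * ε')) := by
      have := Real.add_one_le_exp (-(p * ε')); linarith
    calc (p * (1 - ε') + (1 - p)) ^ T.card ≤ (Real.exp (-(p * ε'))) ^ T.card :=
          pow_le_pow_left₀ hb0 hble _
      _ = Real.exp (-(p * ε') * k) := by rw [← Real.exp_nat_mul, hk]; ring_nf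
  have step2 : Real.exp (m * L) * ((p * (1 - ε') + (1 - p)) ^ T.card
        * (p + (1 - p)) ^ (E0.card - T.card)) ≤ Real.exp (m * L + -(p * ε') * k) := by
    have : (p + (1 - p)) ^ (E0.card - T.card) = 1 := by norm_num
    rw [this, mul_one, Real.exp_add]
    exact mul_le_mul_of_nonneg_left hfac (Real.exp_pos _).le
  have step3 : m * L + -(p * ε') * k ≤ -(ε * D / 4) := by
    have hmpk : m ≤ p * k := by nlinarith [hm', mul_nonneg (mul_nonneg hε0.le hp0.le) hk0]
    have h5 : m * L ≤ m * (ε' + ε'^2) := mul_le_mul_of_nonneg_left hLle hm0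
    have h6 : m * ε'^2 ≤ p * k * ε'^2 := by nlinarith [sq_nonneg ε']
    have e1 : m * ε' ≤ ((1-ε)*p*k - D) * ε' := mul_le_mul_of_nonneg_right hm' hε'0
    have e4 : ((1-ε)*p*k - D)*ε' + p*k*ε'^2 - p*ε'*k ≤ -(ε*D/4) := by
      rw [hε']
      nlinarith [mul_nonneg (mul_nonneg hp0.le hk0) (sq_nonneg ε)]
    clear step1 step2
    linarith [h5, h6, e1, e4]
  calc probE E0 p (fun F => ((F ∩ T).card : ℝ) < m) ≤ _ := step1
    _ ≤ Real.exp (m * L + -(p * ε') * k) := step2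
    _ ≤ Real.exp (-(ε * D / 4)) := Real.exp_le_exp.mpr step3

/- ### Combinatorial lemmas about cores and degrees -/

/-- The set of edges from `u` into `S`, within edge set `E0`. -/
def Tset {n : ℕ} (E0 : Finset (Sym2 (Fin n))) (S : Finset (Fin n)) (u : Fin n) :
    Finset (Sym2 (Fin n)) :=
  (S.filter fun w => w ≠ u ∧ s(u, w) ∈ E0).image (fun w => s(u, w))

lemma Tset_subset {n : ℕ} (E0 : Finset (Sym2 (Fin n))) (S : Finset (Fin n)) (u : Fin n) :
    Tset E0 S u ⊆ E0 := by
  intro e he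
  simp only [Tset, Finset.mem_image, Finset.mem_filter] at he
  obtain ⟨w, ⟨_, _, h⟩, rfl⟩ := he
  exact h

lemma edegIn_eq_card {n : ℕ} (E0 F : Finset (Sym2 (Fin n))) (hF : F ⊆ E0)
    (S : Finset (Fin n)) (u : Fin n) :
    edegIn F S u = (F ∩ Tset E0 S u).card := by
  have himg : (S.filter fun w => w ≠ u ∧ s(u, w) ∈ F).image (fun w => s(u, w))
      = F ∩ Tset E0 S u := by
    ext e
    simp only [Finset.mem_image, Finset.mem_filter, Finset.mem_inter, Tset]
    constructor
    · rintro ⟨w, ⟨hwS, hwu, hwF⟩, rfl⟩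
      exact ⟨hwF, ⟨w, ⟨hwS, hwu, hF hwF⟩, rfl⟩⟩
    · rintro ⟨heF, w, hw, rfl⟩
      exact ⟨w, ⟨hw.1, hw.2.1, heF⟩, rfl⟩
  rw [edegIn, ← himg]
  symm
  apply Finset.card_image_of_injOn
  intro w hw w' hw' h
  simp only [Finset.coe_filter, Set.mem_setOf_eq] at hw hw'
  rcases Sym2.eq_iff.mp h with ⟨-, h2⟩ | ⟨h1, h2⟩
  · exact h2
  · exact absurd h2 hw.2.1

lemma Tset_card {n : ℕ} (E0 : Finset (Sym2 (Fin n))) (S : Finset (Fin n)) (u : Fin n) :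
    (Tset E0 S u).card = edegIn E0 S u := by
  have h := edegIn_eq_card E0 E0 subset_rfl S u
  rw [Finset.inter_eq_right.mpr (Tset_subset E0 S u)] at h
  exact h.symm

lemma emindegIn_le_coreE {n : ℕ} (F : Finset (Sym2 (Fin n))) (S : Finset (Fin n))
    (v : Fin n) (hv : v ∈ S) : emindegIn F S ≤ coreE F v :=
  Finset.le_sup (Finset.mem_filter.mpr ⟨Finset.mem_powerset.mpr (Finset.subset_univ S), hv⟩)

lemma coreE_witness {n : ℕ} (F : Finset (Sym2 (Fin n))) (v : Fin n) :
    ∃ S : Finset (Fin n), v ∈ S ∧ emindegIn F S = coreE F v := by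
  have hne : (((univ : Finset (Fin n)).powerset.filter fun S => v ∈ S)).Nonempty :=
    ⟨{v}, Finset.mem_filter.mpr ⟨Finset.mem_powerset.mpr (Finset.subset_univ _),
      Finset.mem_singleton_self v⟩⟩
  obtain ⟨S, hS, hEq⟩ := Finset.exists_mem_eq_sup _ hne (emindegIn F)
  exact ⟨S, (Finset.mem_filter.mp hS).2, hEq.symm⟩

lemma emindegIn_le_edegIn {n : ℕ} (F : Finset (Sym2 (Fin n))) (S : Finset (Fin n))
    (u : Fin n) (hu : u ∈ S) : emindegIn F S ≤ edegIn F S u := by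
  rw [emindegIn, dif_pos ⟨u, hu⟩]
  exact Finset.inf'_le _ hu

lemma emindegIn_witness {n : ℕ} (F : Finset (Sym2 (Fin n))) (S : Finset (Fin n))
    (h : S.Nonempty) : ∃ u ∈ S, emindegIn F S = edegIn F S u := by
  rw [emindegIn, dif_pos h]
  obtain ⟨u, hu, hEq⟩ := Finset.exists_mem_eq_inf' h (edegIn F S)
  exact ⟨u, hu, hEq⟩

/- ### Main theorem -/

/-- Sampling each edge independently with probability `p`, with high probability every
vertex satisfies `core(G_p, v) ≥ (1 − ε)·p·core(G, v) − O(log n / ε)`. -/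
theorem core_sample_lower_whp :
    ∃ C c : ℝ, 0 < C ∧ 0 < c ∧
      ∀ (n : ℕ) (G : SimpleGraph (Fin n)) [DecidableRel G.Adj] (p ε : ℝ),
        0 < p → p < 1 → 0 < ε → ε < 1 →
        1 - (n : ℝ) ^ (-c) ≤
          probE G.edgeFinset p (fun F => ∀ v : Fin n,
            (1 - ε) * p * (coreE G.edgeFinset v : ℝ) - C * Real.log n / ε
              ≤ (coreE F v : ℝ)) := by
  refine ⟨12, 1, by norm_num, by norm_num, ?_⟩
  intro n G _ p ε hp0 hp1 hε0 hε1
  set E0 := G.edgeFinset with hE0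
  rcases Nat.lt_or_ge n 2 with hn | hn
  · -- trivial cases n = 0, 1
    interval_cases n
    · rw [Nat.cast_zero, Real.zero_rpow (by norm_num : -(1:ℝ) ≠ 0)]
      rw [probE_true E0 p _ (fun F => fun v => v.elim0)]
      norm_num
    · rw [Nat.cast_one, Real.one_rpow]
      have := probE_nonneg E0 p hp0.le hp1.le (fun F => ∀ v : Fin 1,
        (1 - ε) * p * (coreE E0 v : ℝ) - 12 * Real.log 1 / ε ≤ (coreE F v : ℝ))
      linarith
  · -- main case: n ≥ 2
    have hn0 : (0:ℝ) < n := by positivity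
    have hn1 : (1:ℝ) < n := by exact_mod_cast hn
    have hlog : 0 < Real.log n := Real.log_pos hn1
    set D : ℝ := 12 * Real.log n / ε with hD
    have hD0 : 0 < D := by positivity
    choose S hSv hSmin using fun v : Fin n => coreE_witness E0 v
    set m : Fin n → ℝ := fun v => (1 - ε) * p * (coreE E0 v : ℝ) - D with hm
    set bad : Fin n × Fin n → Finset (Sym2 (Fin n)) → Prop :=
      fun i F => i.2 ∈ S i.1 ∧ 0 < m i.1 ∧
        ((F ∩ Tset E0 (S i.1) i.2).card : ℝ) < m i.1 with hbad
    have hUB := probE_union_bound E0 p hp0.le hp1.le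
      (fun F => ∀ v : Fin n, (1 - ε) * p * (coreE E0 v : ℝ) - 12 * Real.log n / ε
        ≤ (coreE F v : ℝ))
      (univ : Finset (Fin n × Fin n)) bad ?_
    · -- bound each bad event
      have hsingle : ∀ i : Fin n × Fin n, probE E0 p (bad i) ≤ Real.exp (-(ε * D / 4)) := by
        intro ⟨v, u⟩
        by_cases hvu : u ∈ S v ∧ 0 < m v
        · obtain ⟨hu, hmv⟩ := hvu
          calc probE E0 p (bad (v, u))
              ≤ probE E0 p (fun F => ((F ∩ Tset E0 (S v) u).card : ℝ) < m v) := by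
                apply probE_mono E0 p hp0.le hp1.le
                intro F hF
                exact hF.2.2
            _ ≤ Real.exp (-(ε * D / 4)) := by
                apply chernoff_tail E0 _ (Tset_subset E0 (S v) u) p hp0 hp1 ε D (m v)
                  hε0 hε1 hD0.le hmv.le
                have hdeg : coreE E0 v ≤ (Tset E0 (S v) u).card := by
                  rw [Tset_card]
                  calc coreE E0 v = emindegIn E0 (S v) := (hSmin v).symm
                    _ ≤ edegIn E0 (S v) u := emindegIn_le_edegIn E0 (S v) u hu
                have : ((coreE E0 v : ℕ) : ℝ) ≤ ((Tset E0 (S v) u).card : ℝ) := by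
                  exact_mod_cast hdeg
                have h1ε : (0:ℝ) ≤ (1 - ε) * p := by nlinarith
                simp only [hm]
                nlinarith [this, h1ε]
        · have : probE E0 p (bad (v, u)) = 0 := by
            apply probE_eq_zero
            intro F hF
            exact hvu ⟨hF.1, hF.2.1⟩
          rw [this]
          exact (Real.exp_pos _).le
      have hsum : ∑ i ∈ (univ : Finset (Fin n × Fin n)), probE E0 p (bad i)
          ≤ (n:ℝ)^2 * Real.exp (-(ε * D / 4)) := by
        calc ∑ i ∈ (univ : Finset (Fin n × Fin n)), probE E0 p (bad i)
            ≤ ∑ _i ∈ (univ : Finset (Fin n × Fin n)), Real.exp (-(ε * D / 4)) :=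
              Finset.sum_le_sum (fun i _ => hsingle i)
          _ = (n:ℝ)^2 * Real.exp (-(ε * D / 4)) := by
              rw [Finset.sum_const, Finset.card_univ, Fintype.card_prod, Fintype.card_fin]
              ring
      have hexp : Real.exp (-(ε * D / 4)) = (n:ℝ) ^ (-(3:ℝ)) := by
        rw [Real.rpow_def_of_pos hn0]
        congr 1
        rw [hD]
        field_simp
        ring
      have hfinal : (n:ℝ)^2 * (n:ℝ) ^ (-(3:ℝ)) = (n:ℝ) ^ (-(1:ℝ)) := by
        rw [← Real.rpow_natCast (n:ℝ) 2, ← Real.rpow_add hn0]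
        norm_num
      calc 1 - (n:ℝ) ^ (-(1:ℝ))
          = 1 - (n:ℝ)^2 * Real.exp (-(ε * D / 4)) := by rw [hexp, hfinal]
        _ ≤ 1 - ∑ i ∈ (univ : Finset (Fin n × Fin n)), probE E0 p (bad i) := by
            linarith [hsum]
        _ ≤ _ := hUB
    · -- if the event fails, some bad event occurs
      intro F hFp hA
      obtain ⟨v, hv⟩ := not_forall.mp hA
      rw [not_le] at hv
      have hF : F ⊆ E0 := Finset.mem_powerset.mp hFp
      have hc0 : (0:ℝ) ≤ (coreE F v : ℝ) := by positivity
      have hmv : 0 < m v := by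
        simp only [hm, hD]
        linarith [hv]
      have hSne : (S v).Nonempty := ⟨v, hSv v⟩
      obtain ⟨u, hu, hEq⟩ := emindegIn_witness F (S v) hSne
      refine ⟨(v, u), Finset.mem_univ _, hu, hmv, ?_⟩
      rw [← edegIn_eq_card E0 F hF (S v) u, ← hEq]
      have h1 : emindegIn F (S v) ≤ coreE F v := emindegIn_le_coreE F (S v) v (hSv v)
      have h2 : (coreE F v : ℝ) < m v := by
        simp only [hm, hD]
        linarith [hv]
      calc ((emindegIn F (S v) : ℕ) : ℝ) ≤ ((coreE F v : ℕ) : ℝ) := by exact_mod_cast h1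
        _ < m v := h2
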